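/- arXiv:2402.15326 — 4 statements merged into one kernel-verified Lean document; each statement's English description precedes it below -/
import Mathlib

section
/- Let n ≥ 1 and let A be an n×n real row-stochastic irreducible matrix (for all u, v there exists k ≥ 1 with (A^k) u v > 0). Let μ : Fin n → ℝ be a probability vector (μ(u) ≥ 0, ∑_u μ(u) = 1) with μᵀ A = μᵀ, and assume the detailed-balance condition μ(u) A u v = μ(v) A v u with μ(u) > 0 for all u, v. Then for every f : Fin n → ℝ and every u, (exp(t • (A − I)) · f)(u) converges, as t → ∞, to the constant ∑_v f(v) μ(v). -/
open Matrix Filter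
open scoped Nat


lemma dirichlet_identity {n : ℕ} (A : Matrix (Fin n) (Fin n) ℝ) (μ : Fin n → ℝ)
    (hA_row : ∀ u, ∑ v, A u v = 1)
    (hdb : ∀ u v, μ u * A u v = μ v * A v u) (x : Fin n → ℝ) :
    2 * (∑ u, μ u * x u * ((1 - A).mulVec x) u)
      = ∑ u, ∑ v, μ u * A u v * (x u - x v)^2 := by
  have hS1 : ∑ u, ∑ v, μ u * A u v * (x u)^2 = ∑ u, μ u * (x u)^2 := by
    refine Finset.sum_congr rfl fun u _ => ?_
    rw [← Finset.sum_mul]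
    rw [show ∀ c : ℝ, (∑ v, μ u * A u v) * c = μ u * (∑ v, A u v) * c from
      fun c => by rw [← Finset.mul_sum]]
    rw [hA_row u, mul_one]
  have hS2 : ∑ u, ∑ v, μ u * A u v * (x v)^2 = ∑ u, μ u * (x u)^2 := by
    have : ∑ u, ∑ v, μ u * A u v * (x v)^2 = ∑ v, ∑ u, μ v * A v u * (x v)^2 := by
      rw [Finset.sum_comm]
      exact Finset.sum_congr rfl fun v _ => Finset.sum_congr rfl fun u _ => by rw [hdb]
    rw [this]
    refine Finset.sum_congr rfl fun v _ => ?_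
    rw [← Finset.sum_mul, ← Finset.mul_sum, hA_row v, mul_one]
  have hL : ∑ u, μ u * x u * ((1 - A).mulVec x) u
      = ∑ u, μ u * (x u)^2 - ∑ u, ∑ v, μ u * A u v * (x u * x v) := by
    rw [← Finset.sum_sub_distrib]
    refine Finset.sum_congr rfl fun u _ => ?_
    rw [Matrix.sub_mulVec, Matrix.one_mulVec]
    simp only [Pi.sub_apply, Matrix.mulVec, dotProduct]
    rw [mul_sub, Finset.mul_sum]
    rw [show μ u * x u * x u = μ u * (x u)^2 from by ring]
    congr 1
    exact Finset.sum_congr rfl fun v _ => by ring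
  rw [hL]
  rw [show ∑ u, ∑ v, μ u * A u v * (x u - x v)^2
      = (∑ u, ∑ v, μ u * A u v * (x u)^2) + (∑ u, ∑ v, μ u * A u v * (x v)^2)
        - 2 * ∑ u, ∑ v, μ u * A u v * (x u * x v) from by
    rw [Finset.mul_sum, ← Finset.sum_add_distrib, ← Finset.sum_sub_distrib]
    refine Finset.sum_congr rfl fun u _ => ?_
    rw [Finset.mul_sum, ← Finset.sum_add_distrib, ← Finset.sum_sub_distrib]
    refine Finset.sum_congr rfl fun v _ => by ring]
  rw [hS1, hS2]
  ring

lemma zero_of_dirichlet_zero {n : ℕ} (hn : 1 ≤ n) (A : Matrix (Fin n) (Fin n) ℝ)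
    (hA_nonneg : ∀ u v, 0 ≤ A u v)
    (hA_irr : ∀ u v, ∃ k : ℕ, 1 ≤ k ∧ 0 < (A ^ k) u v)
    (μ : Fin n → ℝ) (hμ_sum : ∑ u, μ u = 1) (hμ_pos : ∀ u, 0 < μ u)
    (x : Fin n → ℝ) (hmean : ∑ u, μ u * x u = 0)
    (hQ : ∀ u v, 0 < A u v → x u = x v) : x = 0 := by
  -- powers have nonneg entries
  have hpow_nonneg : ∀ k : ℕ, ∀ u v, 0 ≤ (A ^ k) u v := by
    intro k
    induction k with
    | zero => intro u v; by_cases h : u = v <;> simp [Matrix.one_apply, h]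
    | succ m ih =>
      intro u v
      rw [pow_succ, Matrix.mul_apply]
      exact Finset.sum_nonneg fun w _ => mul_nonneg (ih u w) (hA_nonneg w v)
  -- propagation along powers
  have hprop : ∀ k : ℕ, 1 ≤ k → ∀ u v, 0 < (A ^ k) u v → x u = x v := by
    intro k
    induction k with
    | zero => omega
    | succ m ih =>
      intro _ u v hpos
      rcases Nat.eq_zero_or_pos m with hm | hm
      · subst hm
        exact hQ u v (by simpa [pow_one] using hpos)
      · rw [pow_succ, Matrix.mul_apply] at hpos
        obtain ⟨w, _, hw⟩ : ∃ w ∈ Finset.univ, 0 < (A ^ m) u w * A w v := by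
          by_contra hcon
          push_neg at hcon
          have : ∑ w, (A ^ m) u w * A w v ≤ 0 :=
            Finset.sum_nonpos fun w hwu => hcon w hwu
          linarith
        have h1 : 0 < (A ^ m) u w :=
          lt_of_le_of_ne (hpow_nonneg m u w) (by
            intro h0
            rw [← h0] at hw
            nlinarith [hA_nonneg w v])
        have h2 : 0 < A w v := by
          by_contra h0
          push_neg at h0
          have : A w v = 0 := le_antisymm h0 (hA_nonneg w v)
          rw [this, mul_zero] at hw
          exact lt_irrefl 0 hw
        exact (ih hm u w h1).trans (hQ w v h2)
  -- x is constant
  have hconst : ∀ u v, x u = x v := by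
    intro u v
    obtain ⟨k, hk1, hkpos⟩ := hA_irr u v
    exact hprop k hk1 u v hkpos
  -- constant + mean zero ⇒ zero
  funext u
  have : ∑ v, μ v * x v = ∑ v, μ v * x u :=
    Finset.sum_congr rfl fun v _ => by rw [hconst v u]
  rw [this, ← Finset.sum_mul, hμ_sum, one_mul] at hmean
  simpa using hmean

lemma spectral_gap {n : ℕ} (hn : 1 ≤ n) (A : Matrix (Fin n) (Fin n) ℝ)
    (hA_nonneg : ∀ u v, 0 ≤ A u v) (hA_row : ∀ u, ∑ v, A u v = 1)
    (hA_irr : ∀ u v, ∃ k : ℕ, 1 ≤ k ∧ 0 < (A ^ k) u v)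
    (μ : Fin n → ℝ) (hμ_sum : ∑ u, μ u = 1) (hμ_pos : ∀ u, 0 < μ u)
    (hdb : ∀ u v, μ u * A u v = μ v * A v u) :
    ∃ ε : ℝ, 0 < ε ∧ ∀ x : Fin n → ℝ, (∑ u, μ u * x u = 0) →
      ε * (∑ u, μ u * (x u)^2) ≤ ∑ u, μ u * x u * ((1 - A).mulVec x) u := by
  classical
  set Q : (Fin n → ℝ) → ℝ := fun x => ∑ u, μ u * x u * ((1 - A).mulVec x) u with hQdef
  set N : (Fin n → ℝ) → ℝ := fun x => ∑ u, μ u * (x u)^2 with hNdef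
  -- Q is nonnegative-definite, and Q x = 0 with mean zero implies x = 0
  have hQ_pos_aux : ∀ x : Fin n → ℝ, (∑ u, μ u * x u = 0) → Q x ≤ 0 → x = 0 := by
    intro x hmean hQ0
    have hid := dirichlet_identity A μ hA_row hdb x
    have hterms : ∀ u v, μ u * A u v * (x u - x v)^2 = 0 := by
      have hnn : ∀ u ∈ Finset.univ, (0:ℝ) ≤ ∑ v, μ u * A u v * (x u - x v)^2 :=
        fun u _ => Finset.sum_nonneg fun v _ =>
          mul_nonneg (mul_nonneg (hμ_pos u).le (hA_nonneg u v)) (sq_nonneg _)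
      have hsum0 : ∑ u, ∑ v, μ u * A u v * (x u - x v)^2 = 0 := by
        have h1 : ∑ u, ∑ v, μ u * A u v * (x u - x v)^2 ≤ 0 := by
          rw [← hid]; linarith
        exact le_antisymm h1 (Finset.sum_nonneg hnn)
      intro u v
      have houter := (Finset.sum_eq_zero_iff_of_nonneg hnn).mp hsum0 u (Finset.mem_univ u)
      have hinner : ∀ v ∈ Finset.univ, (0:ℝ) ≤ μ u * A u v * (x u - x v)^2 :=
        fun v _ => mul_nonneg (mul_nonneg (hμ_pos u).le (hA_nonneg u v)) (sq_nonneg _)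
      exact (Finset.sum_eq_zero_iff_of_nonneg hinner).mp houter v (Finset.mem_univ v)
    refine zero_of_dirichlet_zero hn A hA_nonneg hA_irr μ hμ_sum hμ_pos x hmean ?_
    intro u v hApos
    have := hterms u v
    have hμA : 0 < μ u * A u v := mul_pos (hμ_pos u) hApos
    have : (x u - x v)^2 = 0 := by
      rcases mul_eq_zero.mp this with h | h
      · exact absurd h (ne_of_gt hμA)
      · exact h
    have := pow_eq_zero_iff (n := 2) (by norm_num) |>.mp this
    linarith [this]
  -- continuity
  have hmulVec_cont : Continuous fun x : Fin n → ℝ => (1 - A).mulVec x := by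
    have : (fun x : Fin n → ℝ => (1 - A).mulVec x) = (Matrix.mulVecLin (1 - A) : _) :=
      rfl
    rw [this]
    exact (Matrix.mulVecLin (1 - A)).continuous_of_finiteDimensional
  have hQcont : Continuous Q := by
    apply continuous_finset_sum
    intro u _
    exact ((continuous_const.mul (continuous_apply u)).mul
      ((continuous_apply u).comp hmulVec_cont))
  have hNcont : Continuous N := by
    apply continuous_finset_sum
    intro u _
    exact continuous_const.mul ((continuous_apply u).pow 2)
  have hMcont : Continuous fun x : Fin n → ℝ => ∑ u, μ u * x u := by
    apply continuous_finset_sum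
    intro u _
    exact continuous_const.mul (continuous_apply u)
  -- compact set
  set K : Set (Fin n → ℝ) := {x | (∑ u, μ u * x u = 0) ∧ N x = 1} with hKdef
  have hKclosed : IsClosed K :=
    (isClosed_eq hMcont continuous_const).inter (isClosed_eq hNcont continuous_const)
  have hKbounded : IsCompact K := by
    apply Metric.isCompact_of_isClosed_isBounded hKclosed
    rw [Metric.isBounded_iff_subset_closedBall 0]
    refine ⟨Real.sqrt (∑ u, (μ u)⁻¹), fun x hx => ?_⟩
    rw [Metric.mem_closedBall, dist_zero_right]
    rw [pi_norm_le_iff_of_nonneg (Real.sqrt_nonneg _)]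
    intro u
    have hx2 : μ u * (x u)^2 ≤ 1 := by
      rw [← hx.2]
      exact Finset.single_le_sum
        (fun v _ => mul_nonneg (hμ_pos v).le (sq_nonneg _)) (Finset.mem_univ u)
    have h1 : (x u)^2 ≤ (μ u)⁻¹ := by
      have h2 : μ u * (μ u)⁻¹ = 1 := mul_inv_cancel₀ (hμ_pos u).ne'
      nlinarith [hμ_pos u]
    have h2 : (μ u)⁻¹ ≤ ∑ v, (μ v)⁻¹ :=
      Finset.single_le_sum (f := fun v => (μ v)⁻¹)
        (fun v _ => by have := hμ_pos v; positivity) (Finset.mem_univ u)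
    calc ‖x u‖ = Real.sqrt ((x u)^2) := by rw [Real.sqrt_sq_eq_abs, Real.norm_eq_abs]
      _ ≤ Real.sqrt (∑ u, (μ u)⁻¹) := Real.sqrt_le_sqrt (h1.trans h2)
  -- scaling: Q and N are quadratic
  have hQscale : ∀ (a : ℝ) (x : Fin n → ℝ), Q (a • x) = a^2 * Q x := by
    intro a x
    simp only [hQdef]
    rw [Finset.mul_sum]
    refine Finset.sum_congr rfl fun u _ => ?_
    rw [Matrix.mulVec_smul]
    simp only [Pi.smul_apply, smul_eq_mul]
    ring
  have hNscale : ∀ (a : ℝ) (x : Fin n → ℝ), N (a • x) = a^2 * N x := by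
    intro a x
    simp only [hNdef]
    rw [Finset.mul_sum]
    refine Finset.sum_congr rfl fun u _ => ?_
    simp only [Pi.smul_apply, smul_eq_mul]
    ring
  -- case on K empty or not
  rcases Set.eq_empty_or_nonempty K with hKe | hKne
  · refine ⟨1, one_pos, fun x hmean => ?_⟩
    have hx0 : x = 0 := by
      by_contra hx0
      have hNx : 0 < N x := by
        obtain ⟨u, hu⟩ := Function.ne_iff.mp hx0
        refine Finset.sum_pos' (fun v _ => mul_nonneg (hμ_pos v).le (sq_nonneg _))
          ⟨u, Finset.mem_univ u, ?_⟩
        have : 0 < (x u)^2 := lt_of_le_of_ne (sq_nonneg _) (Ne.symm (pow_ne_zero 2 hu))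
        exact mul_pos (hμ_pos u) this
      set a := (Real.sqrt (N x))⁻¹ with ha
      have hsq : Real.sqrt (N x) > 0 := Real.sqrt_pos.mpr hNx
      have hz : (a • x) ∈ K := by
        constructor
        · simp only [Pi.smul_apply, smul_eq_mul]
          rw [show ∀ w, ∑ u, μ u * (a * x u) = a * ∑ u, μ u * x u from
            fun w => by rw [Finset.mul_sum]; exact Finset.sum_congr rfl fun u _ => by ring]
          · rw [hmean, mul_zero]
          · exact 0
        · rw [hNscale, ha]
          rw [show ((Real.sqrt (N x))⁻¹)^2 = ((Real.sqrt (N x))^2)⁻¹ from by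
            rw [inv_pow]]
          rw [Real.sq_sqrt hNx.le]
          exact inv_mul_cancel₀ hNx.ne'
      rw [hKe] at hz
      exact hz
    subst hx0
    have : Q 0 = 0 := by
      simp only [hQdef]
      refine Finset.sum_eq_zero fun u _ => by simp
    simp only [hQdef, hNdef] at this ⊢
    simp at this ⊢
  · -- K nonempty compact: minimum exists
    obtain ⟨x₀, hx₀K, hmin⟩ := hKbounded.exists_isMinOn hKne hQcont.continuousOn
    set ε := Q x₀ with hε
    have hεpos : 0 < ε := by
      rcases lt_or_ge 0 ε with h | h
      · exact h
      · exfalso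
        have hx₀0 : x₀ = 0 := hQ_pos_aux x₀ hx₀K.1 h
        have := hx₀K.2
        rw [hx₀0] at this
        simp only [hNdef] at this
        simp at this
    refine ⟨ε, hεpos, fun x hmean => ?_⟩
    by_cases hx0 : x = 0
    · subst hx0
      simp
    · have hNx : 0 < N x := by
        obtain ⟨u, hu⟩ := Function.ne_iff.mp hx0
        refine Finset.sum_pos' (fun v _ => mul_nonneg (hμ_pos v).le (sq_nonneg _))
          ⟨u, Finset.mem_univ u, ?_⟩
        have : 0 < (x u)^2 := lt_of_le_of_ne (sq_nonneg _) (Ne.symm (pow_ne_zero 2 hu))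
        exact mul_pos (hμ_pos u) this
      set s := Real.sqrt (N x) with hs
      have hspos : 0 < s := Real.sqrt_pos.mpr hNx
      set z := s⁻¹ • x with hz
      have hzK : z ∈ K := by
        constructor
        · simp only [hz, Pi.smul_apply, smul_eq_mul]
          rw [show ∑ u, μ u * (s⁻¹ * x u) = s⁻¹ * ∑ u, μ u * x u from by
            rw [Finset.mul_sum]; exact Finset.sum_congr rfl fun u _ => by ring]
          rw [hmean, mul_zero]
        · rw [hz, hNscale, inv_pow, hs, Real.sq_sqrt hNx.le]
          exact inv_mul_cancel₀ hNx.ne'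
      have hQz : ε ≤ Q z := hmin hzK
      have hxz : x = s • z := by
        rw [hz, smul_smul, mul_inv_cancel₀ hspos.ne', one_smul]
      have hQx : Q x = s^2 * Q z := by rw [hxz, hQscale]
      have hNs : s^2 = N x := by rw [hs, Real.sq_sqrt hNx.le]
      show ε * N x ≤ Q x
      rw [hQx]
      calc ε * N x = N x * ε := by ring
        _ ≤ N x * Q z := by
            apply mul_le_mul_of_nonneg_left hQz hNx.le
        _ = s^2 * Q z := by rw [hNs]

lemma exp_mulVec_fixed {n : ℕ} (B : Matrix (Fin n) (Fin n) ℝ) (c : Fin n → ℝ)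
    (h : B.mulVec c = 0) : (NormedSpace.exp B).mulVec c = c := by
  letI : NormedRing (Matrix (Fin n) (Fin n) ℝ) := Matrix.linftyOpNormedRing
  letI : NormedAlgebra ℝ (Matrix (Fin n) (Fin n) ℝ) := Matrix.linftyOpNormedAlgebra
  have hsum : Summable (fun k : ℕ => ((k ! : ℝ))⁻¹ • B ^ k) := NormedSpace.expSeries_summable' B
  let L : Matrix (Fin n) (Fin n) ℝ →ₗ[ℝ] (Fin n → ℝ) :=
    { toFun := fun M => M.mulVec c
      map_add' := fun M N => Matrix.add_mulVec M N c
      map_smul' := fun a M => Matrix.smul_mulVec a M c }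
  have hL : Continuous L := L.continuous_of_finiteDimensional
  have hpow : ∀ k : ℕ, 1 ≤ k → (B ^ k).mulVec c = 0 := by
    intro k hk
    obtain ⟨m, rfl⟩ := Nat.exists_eq_add_of_le hk
    rw [add_comm, pow_succ, ← Matrix.mulVec_mulVec, h, Matrix.mulVec_zero]
  have := hsum.hasSum.mapL ⟨L, hL⟩
  have heq : (NormedSpace.exp B).mulVec c = ∑' k : ℕ, ((k ! : ℝ))⁻¹ • ((B ^ k).mulVec c) := by
    rw [NormedSpace.exp_eq_tsum ℝ]
    have := (ContinuousLinearMap.mk L hL : _ →L[ℝ] _).map_tsum hsum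
    simpa [L, Matrix.smul_mulVec] using this
  rw [heq, tsum_eq_single 0]
  · simp
  · intro k hk
    rw [hpow k (Nat.one_le_iff_ne_zero.mpr hk), smul_zero]

lemma exp_vecMul_fixed {n : ℕ} (B : Matrix (Fin n) (Fin n) ℝ) (μ : Fin n → ℝ)
    (h : Matrix.vecMul μ B = 0) : Matrix.vecMul μ (NormedSpace.exp B) = μ := by
  letI : NormedRing (Matrix (Fin n) (Fin n) ℝ) := Matrix.linftyOpNormedRing
  letI : NormedAlgebra ℝ (Matrix (Fin n) (Fin n) ℝ) := Matrix.linftyOpNormedAlgebra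
  have hsum : Summable (fun k : ℕ => ((k ! : ℝ))⁻¹ • B ^ k) := NormedSpace.expSeries_summable' B
  let L : Matrix (Fin n) (Fin n) ℝ →ₗ[ℝ] (Fin n → ℝ) :=
    { toFun := fun M => Matrix.vecMul μ M
      map_add' := fun M N => Matrix.vecMul_add M N μ
      map_smul' := fun a M => by
        ext i
        simp [Matrix.vecMul, dotProduct, Finset.mul_sum, mul_left_comm, mul_comm] }
  have hL : Continuous L := L.continuous_of_finiteDimensional
  have hpow : ∀ k : ℕ, 1 ≤ k → Matrix.vecMul μ (B ^ k) = 0 := by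
    intro k hk
    obtain ⟨m, rfl⟩ := Nat.exists_eq_add_of_le hk
    rw [add_comm, pow_succ', ← Matrix.vecMul_vecMul, h, Matrix.zero_vecMul]
  have heq : Matrix.vecMul μ (NormedSpace.exp B) = ∑' k : ℕ, ((k ! : ℝ))⁻¹ • (Matrix.vecMul μ (B ^ k)) := by
    rw [NormedSpace.exp_eq_tsum ℝ]
    have := (ContinuousLinearMap.mk L hL : _ →L[ℝ] _).map_tsum hsum
    simpa [L, Matrix.vecMul_smul] using this
  rw [heq, tsum_eq_single 0]
  · simp
  · intro k hk
    rw [hpow k (Nat.one_le_iff_ne_zero.mpr hk), smul_zero]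


/-- Theorem 4.3, oversmoothing: For a row-stochastic irreducible matrix
`A` with invariant probability vector `μ` satisfying detailed balance (with `μ > 0`),
every node feature `(exp (t • (A - 1)) f) u` converges, as `t → ∞`, to the constant
`∑_v f(v) μ(v)`. -/
theorem oversmoothing_convergence_to_invariant_average
    (n : ℕ) (hn : 1 ≤ n) (A : Matrix (Fin n) (Fin n) ℝ)
    (hA_nonneg : ∀ u v, 0 ≤ A u v) (hA_row : ∀ u, ∑ v, A u v = 1)
    (hA_irr : ∀ u v, ∃ k : ℕ, 1 ≤ k ∧ 0 < (A ^ k) u v)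
    (μ : Fin n → ℝ) (hμ_nonneg : ∀ u, 0 ≤ μ u) (hμ_sum : ∑ u, μ u = 1)
    (hμ_inv : ∀ v, ∑ u, μ u * A u v = μ v)
    (hμ_pos : ∀ u, 0 < μ u)
    (hdb : ∀ u v, μ u * A u v = μ v * A v u) :
    ∀ f : Fin n → ℝ, ∀ u : Fin n,
      Tendsto (fun t : ℝ => (NormedSpace.exp (t • (A - 1))).mulVec f u)
        atTop (nhds (∑ v, f v * μ v)) := by
  intro f u₀
  letI : NormedRing (Matrix (Fin n) (Fin n) ℝ) := Matrix.linftyOpNormedRing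
  letI : NormedAlgebra ℝ (Matrix (Fin n) (Fin n) ℝ) := Matrix.linftyOpNormedAlgebra
  obtain ⟨ε, hεpos, hgap⟩ := spectral_gap hn A hA_nonneg hA_row hA_irr μ hμ_sum hμ_pos hdb
  set B := A - 1 with hB
  set c := ∑ v, f v * μ v with hc
  set g : Fin n → ℝ := fun v => f v - c with hg
  set y : ℝ → (Fin n → ℝ) := fun t => (NormedSpace.exp (t • B)).mulVec g with hy
  -- mean zero of g
  have hgmean : ∑ w, μ w * g w = 0 := by
    simp only [hg, mul_sub, Finset.sum_sub_distrib]
    have h1 : ∑ w, μ w * f w = c := by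
      rw [hc]; exact Finset.sum_congr rfl fun w _ => by ring
    have h2 : ∑ w, μ w * c = c := by
      rw [← Finset.sum_mul, hμ_sum, one_mul]
    rw [h1, h2, sub_self]
  -- invariance of μ
  have hμB : Matrix.vecMul μ B = 0 := by
    funext v
    rw [hB, Matrix.vecMul_sub, Matrix.vecMul_one]
    simp only [Pi.sub_apply, Pi.zero_apply]
    rw [show Matrix.vecMul μ A v = ∑ w, μ w * A w v from rfl, hμ_inv v, sub_self]
  have hμtB : ∀ t : ℝ, Matrix.vecMul μ (t • B) = 0 := by
    intro t
    funext v
    simp only [Matrix.vecMul, dotProduct, Matrix.smul_apply, smul_eq_mul, Pi.zero_apply]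
    have : ∀ w, μ w * (t * B w v) = t * (μ w * B w v) := fun w => by ring
    simp_rw [this, ← Finset.mul_sum]
    have : ∑ w, μ w * B w v = 0 := by
      have := congrFun hμB v
      simpa [Matrix.vecMul, dotProduct] using this
    rw [this, mul_zero]
  -- mean of y is zero
  have hmean : ∀ t, ∑ w, μ w * y t w = 0 := by
    intro t
    have h1 : Matrix.vecMul μ (NormedSpace.exp (t • B)) = μ :=
      exp_vecMul_fixed (t • B) μ (hμtB t)
    have h2 : ∑ w, μ w * y t w = dotProduct μ (y t) := rfl
    rw [h2, hy]
    rw [dotProduct_mulVec, h1]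
    exact hgmean
  -- derivative of y coordinates
  have hderiv : ∀ (t : ℝ) (w : Fin n), HasDerivAt (fun s => y s w) (B.mulVec (y t) w) t := by
    intro t w
    have h1 : HasDerivAt (fun s : ℝ => NormedSpace.exp (s • B))
        (B * NormedSpace.exp (t • B)) t := hasDerivAt_exp_smul_const' B t
    let L : Matrix (Fin n) (Fin n) ℝ →ₗ[ℝ] ℝ :=
      { toFun := fun M => M.mulVec g w
        map_add' := fun M N => congrFun (Matrix.add_mulVec M N g) w
        map_smul' := fun a M => by
          have := congrFun (Matrix.smul_mulVec a M g) w
          simpa using this }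
    have hL : Continuous L := L.continuous_of_finiteDimensional
    have h2 := (ContinuousLinearMap.mk L hL : _ →L[ℝ] _).hasFDerivAt.comp_hasDerivAt t h1
    have h3 : (B * NormedSpace.exp (t • B)).mulVec g w = B.mulVec (y t) w := by
      rw [← Matrix.mulVec_mulVec]
    exact h3 ▸ h2
  -- energy function
  set E : ℝ → ℝ := fun t => ∑ w, μ w * (y t w)^2 with hE
  have hEnonneg : ∀ t, 0 ≤ E t :=
    fun t => Finset.sum_nonneg fun w _ => mul_nonneg (hμ_pos w).le (sq_nonneg _)
  have hEderiv : ∀ t, HasDerivAt E (∑ w, μ w * (2 * y t w * B.mulVec (y t) w)) t := by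
    intro t
    apply HasDerivAt.fun_sum
    intro w _
    have h1 := (hderiv t w).pow 2
    have h2 := h1.const_mul (μ w)
    convert h2 using 1
    · rfl
    · rfl
    push_cast
    ring
  -- differential inequality
  have hEineq : ∀ t, (∑ w, μ w * (2 * y t w * B.mulVec (y t) w)) ≤ -(2*ε) * E t := by
    intro t
    have hQ : ε * (∑ w, μ w * (y t w)^2) ≤ ∑ w, μ w * y t w * ((1 - A).mulVec (y t)) w :=
      hgap (y t) (hmean t)
    have hQB : ∑ w, μ w * y t w * ((1 - A).mulVec (y t)) w
        = -∑ w, μ w * y t w * (B.mulVec (y t)) w := by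
      rw [← Finset.sum_neg_distrib]
      refine Finset.sum_congr rfl fun w _ => ?_
      have : (1 - A) = -B := by rw [hB, neg_sub]
      rw [this, Matrix.neg_mulVec]
      simp only [Pi.neg_apply]
      ring
    rw [hQB] at hQ
    have h2 : ∑ w, μ w * (2 * y t w * B.mulVec (y t) w)
        = 2 * ∑ w, μ w * y t w * (B.mulVec (y t)) w := by
      rw [Finset.mul_sum]
      exact Finset.sum_congr rfl fun w _ => by ring
    rw [h2, hE]
    nlinarith [hQ]
  -- Gronwall
  set F : ℝ → ℝ := fun t => E t * Real.exp (2*ε*t) with hF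
  have hFderiv : ∀ t, HasDerivAt F
      ((∑ w, μ w * (2 * y t w * B.mulVec (y t) w)) * Real.exp (2*ε*t)
        + E t * (Real.exp (2*ε*t) * (2*ε))) t := by
    intro t
    have hexp : HasDerivAt (fun t : ℝ => Real.exp (2*ε*t)) (Real.exp (2*ε*t) * (2*ε)) t := by
      have h1 : HasDerivAt (fun t : ℝ => 2*ε*t) (2*ε) t := by
        simpa using (hasDerivAt_id t).const_mul (2*ε)
      exact (Real.hasDerivAt_exp (2*ε*t)).comp t h1
    exact (hEderiv t).mul hexp
  have hFanti : Antitone F := by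
    apply antitone_of_deriv_nonpos
    · exact fun t => (hFderiv t).differentiableAt
    · intro t
      rw [(hFderiv t).deriv]
      have h1 := hEineq t
      have h2 : (0:ℝ) < Real.exp (2*ε*t) := Real.exp_pos _
      nlinarith [hEnonneg t, mul_le_mul_of_nonneg_right h1 h2.le]
  have hEbound : ∀ t : ℝ, 0 ≤ t → E t ≤ E 0 * Real.exp (-(2*ε*t)) := by
    intro t
    intro ht
    have h1 : F t ≤ F 0 := hFanti ht
    rw [hF] at h1
    simp only [mul_zero, Real.exp_zero, mul_one] at h1
    have h2 : (0:ℝ) < Real.exp (2*ε*t) := Real.exp_pos _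
    rw [Real.exp_neg, ← div_eq_mul_inv, le_div_iff₀ h2]
    exact h1
  -- E tends to zero
  have hEtend : Tendsto E atTop (nhds 0) := by
    apply squeeze_zero' (Eventually.of_forall hEnonneg)
      (eventually_atTop.mpr ⟨0, hEbound⟩)
    have h1 : Tendsto (fun t : ℝ => -(2*ε*t)) atTop atBot := by
      have h0 : (fun t : ℝ => -(2*ε*t)) = fun t : ℝ => (-(2*ε)) * t := by
        funext t; ring
      rw [h0]
      exact (tendsto_const_mul_atBot_of_neg (by linarith)).mpr tendsto_id
    have h2 : Tendsto (fun t : ℝ => Real.exp (-(2*ε*t))) atTop (nhds 0) :=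
      Real.tendsto_exp_atBot.comp h1
    have h3 := h2.const_mul (E 0)
    simpa using h3
  -- coordinates tend to zero
  have hytend : Tendsto (fun t => y t u₀) atTop (nhds 0) := by
    have h1 : ∀ t, μ u₀ * (y t u₀)^2 ≤ E t := by
      intro t
      exact Finset.single_le_sum (f := fun w => μ w * (y t w)^2)
        (fun w _ => mul_nonneg (hμ_pos w).le (sq_nonneg _)) (Finset.mem_univ u₀)
    have h2 : Tendsto (fun t => μ u₀ * (y t u₀)^2) atTop (nhds 0) :=
      squeeze_zero (fun t => mul_nonneg (hμ_pos u₀).le (sq_nonneg _)) h1 hEtend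
    have h3 : Tendsto (fun t => (y t u₀)^2) atTop (nhds 0) := by
      have h4 := h2.const_mul (μ u₀)⁻¹
      simp only [mul_zero] at h4
      have heq : (fun t => (μ u₀)⁻¹ * (μ u₀ * (y t u₀)^2)) = fun t => (y t u₀)^2 := by
        funext t
        rw [inv_mul_cancel_left₀ (hμ_pos u₀).ne']
      rwa [heq] at h4
    have hsq : Tendsto (fun t => Real.sqrt ((y t u₀)^2)) atTop (nhds 0) := by
      have hcont : Tendsto Real.sqrt (nhds 0) (nhds 0) := by
        simpa using (Real.continuous_sqrt.tendsto 0)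
      exact hcont.comp h3
    refine squeeze_zero_norm (fun t => ?_) hsq
    rw [Real.norm_eq_abs, ← Real.sqrt_sq_eq_abs]
  -- conclude
  have hfd : ∀ t : ℝ, (NormedSpace.exp (t • B)).mulVec f u₀ = y t u₀ + c := by
    intro t
    have hsplit : f = g + (fun _ => c) := by funext v; simp [hg]
    rw [hsplit, Matrix.mulVec_add]
    have hconst : (t • B).mulVec (fun _ => c) = 0 := by
      funext w
      rw [hB]
      simp only [Matrix.smul_mulVec, Matrix.sub_mulVec, Matrix.one_mulVec]
      simp only [Pi.smul_apply, Pi.sub_apply, Pi.zero_apply, smul_eq_mul]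
      have : (A.mulVec (fun _ => c)) w = c := by
        simp only [Matrix.mulVec, dotProduct]
        rw [show ∑ v, A w v * c = (∑ v, A w v) * c from by rw [Finset.sum_mul]]
        rw [hA_row w, one_mul]
      rw [this, sub_self, mul_zero]
    have := exp_mulVec_fixed (t • B) (fun _ => c) hconst
    rw [this]
    rfl
  rw [show (fun t : ℝ => (NormedSpace.exp (t • (A - 1))).mulVec f u₀)
      = fun t : ℝ => y t u₀ + c from funext fun t => hfd t]
  have := hytend.add_const c
  simpa using this
end

section
/- Let n ≥ 1, let ν be a probability vector on Fin n, let ε ∈ (0, 1], and let A⁽⁰⁾, A⁽¹⁾, … be row-stochastic matrices with A⁽ᵏ⁾ u v ≥ ε · ν(v) for all k, u, v. Set P_t = A⁽ᵗ⁾ ⋯ A⁽⁰⁾ and, for f : Fin n → ℝ, define h_t(u) = ∑_w P_t u w · f(w). Then for all t, u, v: |h_t(u) − h_t(v)| ≤ 2 · (max_w |f(w)|) · (1 − ε)^t; consequently |h_t(u) − h_t(v)| → 0 as t → ∞, i.e. all node features of the nonlinear diffusion converge to a common value (oversmoothing). -/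
open Matrix Filter

/-- corollary of Theorem 4.4, Section 4.2: Under the Doeblin
minorization, the node features `h_t u = ∑_w P_t u w * f w` of nonlinear graph diffusion
satisfy `|h_t u - h_t v| ≤ 2 (max_w |f w|) (1 - ε)^t`, hence `|h_t u - h_t v| → 0`:
all node features converge to a common value (oversmoothing). -/
theorem nonlinear_diffusion_oversmoothing
    (n : ℕ) (hn : 1 ≤ n)
    (ν : Fin n → ℝ) (hν_nonneg : ∀ v, 0 ≤ ν v) (hν_sum : ∑ v, ν v = 1)
    (ε : ℝ) (hε_pos : 0 < ε) (hε_le : ε ≤ 1)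
    (A : ℕ → Matrix (Fin n) (Fin n) ℝ)
    (hA_nonneg : ∀ k u v, 0 ≤ A k u v) (hA_row : ∀ k u, ∑ v, A k u v = 1)
    (hDoeblin : ∀ k u v, ε * ν v ≤ A k u v)
    (P : ℕ → Matrix (Fin n) (Fin n) ℝ)
    (hP0 : P 0 = A 0) (hPsucc : ∀ t, P (t + 1) = A (t + 1) * P t)
    (f : Fin n → ℝ)
    (h : ℕ → Fin n → ℝ) (hdef : ∀ t u, h t u = ∑ w, P t u w * f w) :
    (∀ t : ℕ, ∀ u v : Fin n,
      |h t u - h t v| ≤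
        2 * (Finset.univ.sup' ⟨⟨0, hn⟩, Finset.mem_univ _⟩ fun w => |f w|) * (1 - ε) ^ t) ∧
    (∀ u v : Fin n, Tendsto (fun t : ℕ => |h t u - h t v|) atTop (nhds 0)) := by
  set M := Finset.univ.sup' ⟨⟨0, hn⟩, Finset.mem_univ _⟩ fun w => |f w| with hM
  have hMf : ∀ w, |f w| ≤ M := fun w => Finset.le_sup' (fun w => |f w|) (Finset.mem_univ w)
  have hM0 : 0 ≤ M := le_trans (abs_nonneg _) (hMf ⟨0, hn⟩)
  have hs0 : (0 : ℝ) ≤ 1 - ε := by linarith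
  have key : ∀ t : ℕ, ∀ u v : Fin n, |h t u - h t v| ≤ 2 * M * (1 - ε) ^ t := by
    intro t
    induction t with
    | zero =>
      intro u v
      have habs : ∀ u, |h 0 u| ≤ M := by
        intro u
        rw [hdef, hP0]
        calc |∑ w, A 0 u w * f w| ≤ ∑ w, |A 0 u w * f w| := Finset.abs_sum_le_sum_abs _ _
          _ ≤ ∑ w, A 0 u w * M := by
              apply Finset.sum_le_sum
              intro w _
              rw [abs_mul, abs_of_nonneg (hA_nonneg 0 u w)]
              exact mul_le_mul_of_nonneg_left (hMf w) (hA_nonneg 0 u w)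
          _ = M := by rw [← Finset.sum_mul, hA_row, one_mul]
      calc |h 0 u - h 0 v| ≤ |h 0 u| + |h 0 v| := abs_sub _ _
        _ ≤ M + M := add_le_add (habs u) (habs v)
        _ = 2 * M * (1 - ε) ^ 0 := by ring
    | succ t ih =>
      intro u v
      have hrec : ∀ x, h (t + 1) x = ∑ k, A (t + 1) x k * h t k := by
        intro x
        rw [hdef]
        simp only [hPsucc, Matrix.mul_apply, Finset.sum_mul]
        rw [Finset.sum_comm]
        refine Finset.sum_congr rfl fun k _ => ?_
        rw [hdef, Finset.mul_sum]
        exact Finset.sum_congr rfl fun w _ => by ring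
      set B : Fin n → Fin n → ℝ := fun x k => A (t + 1) x k - ε * ν k with hB
      have hBnn : ∀ x k, 0 ≤ B x k := fun x k => sub_nonneg.2 (hDoeblin _ _ _)
      have hBsum : ∀ x, ∑ k, B x k = 1 - ε := by
        intro x
        simp only [hB, Finset.sum_sub_distrib, hA_row, ← Finset.mul_sum, hν_sum, mul_one]
      have hdiff : h (t + 1) u - h (t + 1) v
          = (∑ k, B u k * h t k) - (∑ k, B v k * h t k) := by
        rw [hrec u, hrec v]
        simp only [hB, sub_mul, Finset.sum_sub_distrib]
        ring
      rcases eq_or_lt_of_le hs0 with hse | hs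
      · have hBz : ∀ x k, B x k = 0 := by
          intro x k
          have hz : ∑ k, B x k = 0 := by rw [hBsum x, ← hse]
          exact (Finset.sum_eq_zero_iff_of_nonneg fun i _ => hBnn x i).1 hz k (Finset.mem_univ k)
        rw [hdiff]
        simp only [hBz, zero_mul, Finset.sum_const_zero, sub_zero, abs_zero, ← hse]
        positivity
      · have hmul : (1 - ε) * (h (t + 1) u - h (t + 1) v)
            = ∑ k, ∑ l, B u k * B v l * (h t k - h t l) := by
          have e1 : ∑ k, ∑ l, B u k * B v l * (h t k - h t l)
              = (∑ k, B u k * h t k) * (∑ l, B v l)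
                - (∑ k, B u k) * (∑ l, B v l * h t l) := by
            rw [Finset.sum_mul_sum, Finset.sum_mul_sum, ← Finset.sum_sub_distrib]
            refine Finset.sum_congr rfl fun k _ => ?_
            rw [← Finset.sum_sub_distrib]
            exact Finset.sum_congr rfl fun l _ => by ring
          rw [e1, hBsum, hBsum, hdiff]
          ring
        have hd : (1 - ε) * |h (t + 1) u - h (t + 1) v|
            ≤ (1 - ε) * ((1 - ε) * (2 * M * (1 - ε) ^ t)) := by
          rw [show (1 - ε) * |h (t + 1) u - h (t + 1) v|
              = |(1 - ε) * (h (t + 1) u - h (t + 1) v)| by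
                rw [abs_mul, abs_of_nonneg hs0]]
          rw [hmul]
          calc |∑ k, ∑ l, B u k * B v l * (h t k - h t l)|
              ≤ ∑ k, ∑ l, |B u k * B v l * (h t k - h t l)| := by
                refine (Finset.abs_sum_le_sum_abs _ _).trans ?_
                exact Finset.sum_le_sum fun k _ => Finset.abs_sum_le_sum_abs _ _
            _ ≤ ∑ k, ∑ l, B u k * B v l * (2 * M * (1 - ε) ^ t) := by
                refine Finset.sum_le_sum fun k _ => Finset.sum_le_sum fun l _ => ?_
                rw [abs_mul, abs_mul, abs_of_nonneg (hBnn u k), abs_of_nonneg (hBnn v l)]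
                exact mul_le_mul_of_nonneg_left (ih k l)
                  (mul_nonneg (hBnn u k) (hBnn v l))
            _ = (∑ k, B u k) * (∑ l, B v l) * (2 * M * (1 - ε) ^ t) := by
                rw [Finset.sum_mul_sum, Finset.sum_mul]
                exact Finset.sum_congr rfl fun k _ => by rw [Finset.sum_mul]
            _ = (1 - ε) * ((1 - ε) * (2 * M * (1 - ε) ^ t)) := by
                rw [hBsum, hBsum]; ring
        have hle := le_of_mul_le_mul_left hd hs
        calc |h (t + 1) u - h (t + 1) v| ≤ (1 - ε) * (2 * M * (1 - ε) ^ t) := hle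
          _ = 2 * M * (1 - ε) ^ (t + 1) := by ring
  refine ⟨key, fun u v => ?_⟩
  have h1 : Tendsto (fun t : ℕ => 2 * M * (1 - ε) ^ t) atTop (nhds 0) := by
    have h2 := tendsto_pow_atTop_nhds_zero_of_lt_one hs0 (by linarith : (1 : ℝ) - ε < 1)
    simpa using h2.const_mul (2 * M)
  exact squeeze_zero (fun t => abs_nonneg _) (fun t => key t u v) h1
end

section
/- Let n ≥ 1, let A be an n×n real matrix with all entries nonnegative, and let h ≥ 0. Then for every index u, the diagonal entry of the matrix exponential satisfies (exp(h • A)) u u ≥ exp(h · A u u). Consequently, if A is row-stochastic, (exp(h • (A − I))) u u ≥ exp(−h · (1 − A u u)), i.e. 1 − (exp(h(A − I))) u u ≤ 1 − e^{h(A u u − 1)}. -/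
open Matrix

section Aux

variable {n : ℕ}

lemma pow_entry_nonneg (B : Matrix (Fin n) (Fin n) ℝ) (hB : ∀ u v, 0 ≤ B u v) :
    ∀ (k : ℕ) (u v : Fin n), 0 ≤ (B ^ k) u v := by
  intro k
  induction k with
  | zero => intro u v; simp [Matrix.one_apply]; positivity
  | succ k ih =>
    intro u v
    rw [pow_succ, Matrix.mul_apply]
    exact Finset.sum_nonneg fun w _ => mul_nonneg (ih u w) (hB w v)

lemma pow_diag_ge (B : Matrix (Fin n) (Fin n) ℝ) (hB : ∀ u v, 0 ≤ B u v) (u : Fin n) :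
    ∀ k : ℕ, (B u u) ^ k ≤ (B ^ k) u u := by
  intro k
  induction k with
  | zero => simp [Matrix.one_apply]
  | succ k ih =>
    rw [pow_succ, pow_succ, Matrix.mul_apply]
    calc B u u ^ k * B u u ≤ (B ^ k) u u * B u u :=
          mul_le_mul_of_nonneg_right ih (hB u u)
      _ ≤ ∑ w, (B ^ k) u w * B w u := by
          refine Finset.single_le_sum (f := fun w => (B ^ k) u w * B w u)
            (fun w _ => mul_nonneg (pow_entry_nonneg B hB k u w) (hB w u)) (Finset.mem_univ u)

lemma exp_entry_hasSum (M : Matrix (Fin n) (Fin n) ℝ) (u : Fin n) :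
    HasSum (fun k : ℕ => ((k.factorial : ℝ))⁻¹ * (M ^ k) u u)
      (NormedSpace.exp M u u) := by
  letI : SeminormedRing (Matrix (Fin n) (Fin n) ℝ) := Matrix.linftyOpSemiNormedRing
  letI : NormedRing (Matrix (Fin n) (Fin n) ℝ) := Matrix.linftyOpNormedRing
  letI : NormedAlgebra ℝ (Matrix (Fin n) (Fin n) ℝ) := Matrix.linftyOpNormedAlgebra
  have hs := NormedSpace.expSeries_summable' (𝕂 := ℝ) M
  have hsum := hs.hasSum
  erw [← show NormedSpace.exp M = _ from congrFun (NormedSpace.exp_eq_tsum ℝ) M] at hsum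
  have hcont : Continuous (Matrix.entryLinearMap ℝ ℝ u u) :=
    LinearMap.continuous_of_finiteDimensional _
  have := hsum.map (Matrix.entryLinearMap ℝ ℝ u u) hcont
  simpa [Function.comp_def, Matrix.entryLinearMap_apply, Matrix.smul_apply] using this

lemma exp_diag_ge (M : Matrix (Fin n) (Fin n) ℝ) (hM : ∀ u v, 0 ≤ M u v) (u : Fin n) :
    Real.exp (M u u) ≤ NormedSpace.exp M u u := by
  have h1 := exp_entry_hasSum M u
  have h2 : HasSum (fun k : ℕ => (M u u) ^ k / k.factorial) (Real.exp (M u u)) := by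
    simpa using (Real.exp_eq_exp_ℝ ▸ NormedSpace.expSeries_div_hasSum_exp (M u u))
  refine h2.tsum_eq ▸ h1.tsum_eq ▸ Summable.tsum_le_tsum ?_ h2.summable h1.summable
  intro k
  rw [div_eq_inv_mul]
  exact mul_le_mul_of_nonneg_left (pow_diag_ge M hM u k) (by positivity)

end Aux

/-- holding-probability bound in Appendix B.2: For an entrywise
nonnegative matrix `A` and `h ≥ 0`, the diagonal entries of the matrix exponential satisfy
`(exp (h • A)) u u ≥ exp (h * A u u)`. Consequently, if `A` is row-stochastic, then
`(exp (h • (A - 1))) u u ≥ exp (-(h * (1 - A u u)))`, i.e.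
`1 - (exp (h • (A - 1))) u u ≤ 1 - exp (h * (A u u - 1))`. -/
theorem exp_diagonal_lower_bound
    (n : ℕ) (hn : 1 ≤ n) (A : Matrix (Fin n) (Fin n) ℝ)
    (hA_nonneg : ∀ u v, 0 ≤ A u v) (h : ℝ) (hh : 0 ≤ h) :
    (∀ u : Fin n, Real.exp (h * A u u) ≤ NormedSpace.exp (h • A) u u) ∧
    ((∀ u, ∑ v, A u v = 1) → ∀ u : Fin n,
      Real.exp (-(h * (1 - A u u))) ≤ NormedSpace.exp (h • (A - 1)) u u ∧
      1 - NormedSpace.exp (h • (A - 1)) u u ≤ 1 - Real.exp (h * (A u u - 1))) := by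
  have hmain : ∀ u : Fin n, Real.exp (h * A u u) ≤ NormedSpace.exp (h • A) u u := by
    intro u
    have := exp_diag_ge (h • A) (fun u v => mul_nonneg hh (hA_nonneg u v)) u
    simpa [Matrix.smul_apply] using this
  refine ⟨hmain, fun _ u => ?_⟩
  have hsplit : h • (A - 1) = h • A + (-h) • (1 : Matrix (Fin n) (Fin n) ℝ) := by
    rw [smul_sub]; module
  have hcomm : Commute (h • A) ((-h) • (1 : Matrix (Fin n) (Fin n) ℝ)) :=
    ((Commute.one_right (h • A)).smul_right (-h))
  have hexp1 : NormedSpace.exp ((-h) • (1 : Matrix (Fin n) (Fin n) ℝ))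
      = Real.exp (-h) • (1 : Matrix (Fin n) (Fin n) ℝ) := by
    letI : SeminormedRing (Matrix (Fin n) (Fin n) ℝ) := Matrix.linftyOpSemiNormedRing
    letI : NormedRing (Matrix (Fin n) (Fin n) ℝ) := Matrix.linftyOpNormedRing
    letI : NormedAlgebra ℝ (Matrix (Fin n) (Fin n) ℝ) := Matrix.linftyOpNormedAlgebra
    have : (-h) • (1 : Matrix (Fin n) (Fin n) ℝ) = algebraMap ℝ _ (-h) := by
      simp [Algebra.algebraMap_eq_smul_one]
    erw [this, ← NormedSpace.algebraMap_exp_comm, Real.exp_eq_exp_ℝ,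
      Algebra.algebraMap_eq_smul_one]
  have hprod : NormedSpace.exp (h • (A - 1))
      = Real.exp (-h) • NormedSpace.exp (h • A) := by
    rw [hsplit, Matrix.exp_add_of_commute _ _ hcomm, hexp1, Matrix.mul_smul, Matrix.mul_one]
  have hentry : NormedSpace.exp (h • (A - 1)) u u
      = Real.exp (-h) * NormedSpace.exp (h • A) u u := by
    rw [hprod]; simp [Matrix.smul_apply]
  have key : Real.exp (-(h * (1 - A u u))) ≤ NormedSpace.exp (h • (A - 1)) u u := by
    rw [hentry]
    have : Real.exp (-(h * (1 - A u u))) = Real.exp (-h) * Real.exp (h * A u u) := by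
      rw [← Real.exp_add]; ring_nf
    rw [this]
    exact mul_le_mul_of_nonneg_left (hmain u) (Real.exp_nonneg _)
  refine ⟨key, ?_⟩
  have heq : Real.exp (h * (A u u - 1)) = Real.exp (-(h * (1 - A u u))) := by ring_nf
  rw [heq]
  linarith [key]
end

section
/- Let n ≥ 1, let A be an n×n real row-stochastic matrix, and let μ be a positive probability vector on Fin n satisfying detailed balance μ(u) A u v = μ(v) A v u for all u, v (so A is self-adjoint in L²(μ)). Then for every f : Fin n → ℝ, exp(t • (A − I)) · f converges as t → ∞ to the L²(μ)-orthogonal projection of f onto the eigenspace {g : A g = g}. In particular, if A g = g for some non-constant g, then exp(t • (A − I)) g = g for all t ≥ 0 and the limit of the diffusion started at g is non-constant, so oversmoothing does not occur. -/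
open Matrix Filter

/-- Eigenvalues of a row-stochastic nonnegative matrix have absolute value at most 1. -/
lemma stochastic_eig_bound {n : ℕ} (A : Matrix (Fin n) (Fin n) ℝ)
    (hA_nonneg : ∀ u v, 0 ≤ A u v) (hA_row : ∀ u, ∑ v, A u v = 1)
    (c : ℝ) (w : Fin n → ℝ) (hw : w ≠ 0) (h : A.mulVec w = c • w) : |c| ≤ 1 := by
  obtain ⟨u1, hu1⟩ : ∃ u, w u ≠ 0 := by
    by_contra hc
    push_neg at hc
    exact hw (funext hc)
  have hne : (Finset.univ : Finset (Fin n)).Nonempty := ⟨u1, Finset.mem_univ u1⟩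
  obtain ⟨u0, -, hu0⟩ := Finset.exists_max_image Finset.univ (fun u => |w u|) hne
  have hmax : ∀ v, |w v| ≤ |w u0| := fun v => hu0 v (Finset.mem_univ v)
  have hpos : 0 < |w u0| := lt_of_lt_of_le (abs_pos.2 hu1) (hmax u1)
  have key : |c| * |w u0| ≤ 1 * |w u0| := by
    rw [one_mul, ← abs_mul]
    have h0 : c * w u0 = (A.mulVec w) u0 := by
      have := congrFun h u0
      rw [Pi.smul_apply, smul_eq_mul] at this
      exact this.symm
    rw [h0]
    calc |(A.mulVec w) u0| = |∑ v, A u0 v * w v| := by rw [Matrix.mulVec, dotProduct]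
      _ ≤ ∑ v, |A u0 v * w v| := Finset.abs_sum_le_sum_abs _ _
      _ ≤ ∑ v, A u0 v * |w u0| := by
          apply Finset.sum_le_sum
          intro v _
          rw [abs_mul, abs_of_nonneg (hA_nonneg u0 v)]
          exact mul_le_mul_of_nonneg_left (hmax v) (hA_nonneg u0 v)
      _ = |w u0| := by rw [← Finset.sum_mul, hA_row, one_mul]
  exact le_of_mul_le_mul_right key hpos

/-- spectral argument of Theorem 4.3 / Appendix A.3: For a
row-stochastic matrix `A` that is self-adjoint in `L²(μ)` (detailed balance with positive
probability vector `μ`), the diffusion `exp (t • (A - 1)) f` converges as `t → ∞` to the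
`L²(μ)`-orthogonal projection `L` of `f` onto the eigenspace `{g : A g = g}` (i.e. `L` is
in the eigenspace and `f - L` is `L²(μ)`-orthogonal to it). In particular any eigenvector
`g` with `A g = g` is fixed by the semigroup for all `t`, and if such a `g` is
non-constant then the limit of the diffusion started at `g` is non-constant:
oversmoothing does not occur. -/
theorem convergence_to_orthogonal_projection
    (n : ℕ) (hn : 1 ≤ n) (A : Matrix (Fin n) (Fin n) ℝ)
    (hA_nonneg : ∀ u v, 0 ≤ A u v) (hA_row : ∀ u, ∑ v, A u v = 1)
    (μ : Fin n → ℝ) (hμ_pos : ∀ u, 0 < μ u) (hμ_sum : ∑ u, μ u = 1)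
    (hdb : ∀ u v, μ u * A u v = μ v * A v u) :
    (∀ f : Fin n → ℝ, ∃ L : Fin n → ℝ,
      A.mulVec L = L ∧
      (∀ g : Fin n → ℝ, A.mulVec g = g → ∑ u, (f u - L u) * g u * μ u = 0) ∧
      Tendsto (fun t : ℝ => (NormedSpace.exp (t • (A - 1))).mulVec f)
        atTop (nhds L)) ∧
    (∀ g : Fin n → ℝ, A.mulVec g = g →
      ∀ t : ℝ, (NormedSpace.exp (t • (A - 1))).mulVec g = g) ∧
    (∀ g : Fin n → ℝ, A.mulVec g = g → (¬ ∃ c : ℝ, g = fun _ => c) →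
      ∃ L : Fin n → ℝ,
        Tendsto (fun t : ℝ => (NormedSpace.exp (t • (A - 1))).mulVec g)
          atTop (nhds L) ∧ ¬ ∃ c : ℝ, L = fun _ => c) := by
  classical
  set d : Fin n → ℝ := fun u => Real.sqrt (μ u) with hd_def
  have hdpos : ∀ u, 0 < d u := fun u => Real.sqrt_pos.2 (hμ_pos u)
  have hdd : ∀ u, d u * d u = μ u := fun u => Real.mul_self_sqrt (hμ_pos u).le
  set D : Matrix (Fin n) (Fin n) ℝ := diagonal d with hD_def
  set Di : Matrix (Fin n) (Fin n) ℝ := diagonal (fun u => (d u)⁻¹) with hDi_def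
  have hDDi : D * Di = 1 := by
    rw [hD_def, hDi_def, diagonal_mul_diagonal]
    have : (fun i => d i * (d i)⁻¹) = fun _ => (1 : ℝ) :=
      funext fun u => mul_inv_cancel₀ (hdpos u).ne'
    rw [this, diagonal_one]
  have hDiD : Di * D = 1 := by
    rw [hD_def, hDi_def, diagonal_mul_diagonal]
    have : (fun i => (d i)⁻¹ * d i) = fun _ => (1 : ℝ) :=
      funext fun u => inv_mul_cancel₀ (hdpos u).ne'
    rw [this, diagonal_one]
  set S : Matrix (Fin n) (Fin n) ℝ := D * A * Di with hS_def
  have hSentry : ∀ u v, S u v = d u * A u v * (d v)⁻¹ := by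
    intro u v
    rw [hS_def, hD_def, hDi_def, Matrix.mul_diagonal, Matrix.diagonal_mul]
  have hSherm : S.IsHermitian := by
    rw [Matrix.IsHermitian]
    ext u v
    rw [Matrix.conjTranspose_apply, hSentry, hSentry]
    have h1 : μ v * A v u = μ u * A u v := hdb v u
    rw [← hdd u, ← hdd v] at h1
    have h2 : star (d v * A v u * (d u)⁻¹) = d v * A v u * (d u)⁻¹ := rfl
    rw [h2]
    have hu := (hdpos u).ne'
    have hv := (hdpos v).ne'
    field_simp
    linear_combination h1
  set Um : Matrix (Fin n) (Fin n) ℝ := (hSherm.eigenvectorUnitary : Matrix (Fin n) (Fin n) ℝ)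
    with hUm_def
  set lam : Fin n → ℝ := hSherm.eigenvalues with hlam_def
  have hspec : S = Um * diagonal lam * star Um := by
    have := hSherm.spectral_theorem
    simpa using this
  have hUUs : Um * star Um = 1 := (Matrix.mem_unitaryGroup_iff).mp hSherm.eigenvectorUnitary.2
  have hUsU : star Um * Um = 1 := (Matrix.mem_unitaryGroup_iff').mp hSherm.eigenvectorUnitary.2
  -- the change-of-basis matrices
  set Vm : Matrix (Fin n) (Fin n) ℝ := Di * Um with hVm_def
  set Vi : Matrix (Fin n) (Fin n) ℝ := star Um * D with hVi_def
  have hVVi : Vm * Vi = 1 := by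
    rw [hVm_def, hVi_def, Matrix.mul_assoc, ← Matrix.mul_assoc Um, hUUs, Matrix.one_mul, hDiD]
  have hViV : Vi * Vm = 1 := by
    rw [hVm_def, hVi_def, Matrix.mul_assoc, ← Matrix.mul_assoc D, hDDi, Matrix.one_mul, hUsU]
  -- decomposition of A
  have hAdec : A = Vm * diagonal lam * Vi := by
    rw [hVm_def, hVi_def]
    have h0 : Di * S * D = A := by
      rw [hS_def]
      rw [Matrix.mul_assoc, Matrix.mul_assoc, hDiD, Matrix.mul_one, ← Matrix.mul_assoc, hDiD,
        Matrix.one_mul]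
    rw [← h0, hspec]
    noncomm_ring
  -- exponential formula
  have hexp : ∀ t : ℝ, NormedSpace.exp (t • (A - 1))
      = Vm * diagonal (fun i => Real.exp (t * (lam i - 1))) * Vi := by
    intro t
    have h1 : t • (A - 1) = Vm * diagonal (fun i => t * (lam i - 1)) * Vi := by
      have hone : (1 : Matrix (Fin n) (Fin n) ℝ) = Vm * diagonal (fun _ => (1 : ℝ)) * Vi := by
        rw [diagonal_one, Matrix.mul_one, hVVi]
      have hdiag : diagonal lam - diagonal (fun _ => (1:ℝ)) = diagonal (fun i => lam i - 1) :=
        Matrix.diagonal_sub _ _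
      calc t • (A - 1)
          = t • (Vm * (diagonal lam - diagonal (fun _ => (1:ℝ))) * Vi) := by
            rw [Matrix.mul_sub, Matrix.sub_mul, ← hAdec, ← hone]
        _ = Vm * (t • (diagonal lam - diagonal (fun _ => (1:ℝ)))) * Vi := by
            rw [Matrix.mul_smul, Matrix.smul_mul]
        _ = Vm * diagonal (fun i => t * (lam i - 1)) * Vi := by
            rw [hdiag]
            have hsd : t • diagonal (fun i => lam i - 1)
                = diagonal (fun i => t * (lam i - 1)) := by
              rw [← Matrix.diagonal_smul]
              congr 1
            rw [hsd]
    set Vu : (Matrix (Fin n) (Fin n) ℝ)ˣ := ⟨Vm, Vi, hVVi, hViV⟩ with hVu_def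
    have hc1 : (↑Vu : Matrix (Fin n) (Fin n) ℝ) = Vm := rfl
    have hc2 : (↑Vu⁻¹ : Matrix (Fin n) (Fin n) ℝ) = Vi := rfl
    rw [h1, ← hc1, ← hc2, Matrix.exp_units_conj Vu, Matrix.exp_diagonal, Pi.exp_def,
      Real.exp_eq_exp_ℝ]
  -- eigenvalue bound
  have hlam_le : ∀ i, lam i ≤ 1 := by
    intro i
    set w : Fin n → ℝ := fun u => Vm u i with hw_def
    have hAw : A.mulVec w = lam i • w := by
      have hAV : A * Vm = Vm * diagonal lam := by
        rw [hAdec, Matrix.mul_assoc, hViV, Matrix.mul_one]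
      funext u
      have := congrFun (congrFun hAV u) i
      rw [Matrix.mul_apply, Matrix.mul_diagonal] at this
      simpa [Matrix.mulVec, dotProduct, hw_def, mul_comm] using this
    have hwne : w ≠ 0 := by
      intro hw0
      have h1 : (Vi * Vm) i i = 1 := by rw [hViV]; simp
      rw [Matrix.mul_apply] at h1
      have h2 : ∀ k, Vm k i = 0 := fun k => congrFun hw0 k
      simp only [h2, mul_zero, Finset.sum_const_zero] at h1
      exact zero_ne_one h1
    have := stochastic_eig_bound A hA_nonneg hA_row (lam i) w hwne hAw
    exact le_trans (le_abs_self _) this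
  -- limit projection data
  set ind : Fin n → ℝ := fun i => if lam i = 1 then 1 else 0 with hind_def
  set P : Matrix (Fin n) (Fin n) ℝ := Vm * diagonal ind * Vi with hP_def
  -- a fixed vector of A is fixed by any Vm diag(e) Vi with e = 1 on {lam=1}
  have hfix : ∀ g : Fin n → ℝ, A.mulVec g = g → ∀ e : Fin n → ℝ, (∀ i, lam i = 1 → e i = 1) →
      (Vm * diagonal e * Vi).mulVec g = g := by
    intro g hg e he
    set h : Fin n → ℝ := Vi.mulVec g with hh_def
    have hdl : (diagonal lam).mulVec h = h := by
      have h1 : (Vm * diagonal lam * Vi).mulVec g = g := by rw [← hAdec]; exact hg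
      have h2 := congrArg (fun x => Vi.mulVec x) h1
      rw [Matrix.mulVec_mulVec] at h2
      have hViA : Vi * (Vm * diagonal lam * Vi) = diagonal lam * Vi := by
        calc Vi * (Vm * diagonal lam * Vi) = (Vi * Vm) * (diagonal lam * Vi) := by noncomm_ring
          _ = diagonal lam * Vi := by rw [hViV, Matrix.one_mul]
      rw [hViA] at h2
      rw [hh_def, Matrix.mulVec_mulVec]
      exact h2
    have hzero : ∀ i, lam i ≠ 1 → h i = 0 := by
      intro i hi
      have hthis := congrFun hdl i
      rw [Matrix.mulVec_diagonal] at hthis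
      by_contra hne
      exact hi (mul_right_cancel₀ hne (by rw [hthis, one_mul]))
    have hde : (diagonal e).mulVec h = h := by
      funext i
      rw [Matrix.mulVec_diagonal]
      by_cases hi : lam i = 1
      · rw [he i hi, one_mul]
      · rw [hzero i hi, mul_zero]
    calc (Vm * diagonal e * Vi).mulVec g
        = Vm.mulVec ((diagonal e).mulVec h) := by
          rw [← Matrix.mulVec_mulVec, ← Matrix.mulVec_mulVec]
      _ = Vm.mulVec (Vi.mulVec g) := by rw [hde]
      _ = g := by rw [Matrix.mulVec_mulVec, hVVi, Matrix.one_mulVec]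
  -- part 2
  have part2 : ∀ g : Fin n → ℝ, A.mulVec g = g →
      ∀ t : ℝ, (NormedSpace.exp (t • (A - 1))).mulVec g = g := by
    intro g hg t
    rw [hexp t]
    exact hfix g hg _ (fun i hi => by rw [hi]; simp)
  -- symmetry of P w.r.t. μ
  have hPsym : ∀ u v, μ u * P u v = μ v * P v u := by
    intro u v
    have hM : diagonal μ * P = D * (Um * diagonal ind * star Um) * D := by
      have hμdd : diagonal μ = D * D := by
        rw [hD_def, diagonal_mul_diagonal]
        have : (fun i => d i * d i) = μ := funext fun u => hdd u
        rw [this]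
      have hPc : P = Di * (Um * diagonal ind * star Um) * D := by
        rw [hP_def, hVm_def, hVi_def]; noncomm_ring
      rw [hμdd, hPc]
      calc D * D * (Di * (Um * diagonal ind * star Um) * D)
          = D * (D * Di) * (Um * diagonal ind * star Um) * D := by noncomm_ring
        _ = D * (Um * diagonal ind * star Um) * D := by rw [hDDi, Matrix.mul_one]
    set M : Matrix (Fin n) (Fin n) ℝ := D * (Um * diagonal ind * star Um) * D with hM_def
    have hMherm : M.IsHermitian := by
      rw [hM_def]
      have hDh : Dᴴ = D := by
        rw [hD_def]
        simp [Matrix.diagonal_conjTranspose]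
      have hX : (Um * diagonal ind * star Um).IsHermitian := by
        rw [Matrix.star_eq_conjTranspose]
        exact Matrix.isHermitian_mul_mul_conjTranspose Um (Matrix.isHermitian_diagonal ind)
      have := Matrix.isHermitian_mul_mul_conjTranspose D hX
      rwa [hDh] at this
    have h1 : (diagonal μ * P) u v = μ u * P u v := Matrix.diagonal_mul _ _ _ _
    have h2 : (diagonal μ * P) v u = μ v * P v u := Matrix.diagonal_mul _ _ _ _
    have h3 : M u v = M v u := by
      conv_lhs => rw [← hMherm]
      rw [Matrix.conjTranspose_apply]
      rfl
    rw [← h1, ← h2, hM, h3]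
  have hlamind : (fun i => lam i * ind i) = ind := by
    funext i
    rw [hind_def]
    by_cases hi : lam i = 1 <;> simp [hi]
  have hindind : (fun i => ind i * ind i) = ind := by
    funext i
    rw [hind_def]
    by_cases hi : lam i = 1 <;> simp [hi]
  -- P is idempotent with A * P = P
  have hAP : A * P = P := by
    rw [hAdec, hP_def]
    calc Vm * diagonal lam * Vi * (Vm * diagonal ind * Vi)
        = Vm * diagonal lam * (Vi * Vm) * diagonal ind * Vi := by noncomm_ring
      _ = Vm * (diagonal lam * diagonal ind) * Vi := by
          rw [hViV, Matrix.mul_one]; noncomm_ring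
      _ = Vm * diagonal ind * Vi := by rw [diagonal_mul_diagonal, hlamind]
  have hPP : P * P = P := by
    rw [hP_def]
    calc Vm * diagonal ind * Vi * (Vm * diagonal ind * Vi)
        = Vm * diagonal ind * (Vi * Vm) * diagonal ind * Vi := by noncomm_ring
      _ = Vm * (diagonal ind * diagonal ind) * Vi := by
          rw [hViV, Matrix.mul_one]; noncomm_ring
      _ = Vm * diagonal ind * Vi := by rw [diagonal_mul_diagonal, hindind]
  -- swap lemma for the weighted inner product
  have hswap : ∀ x y : Fin n → ℝ,
      ∑ u, (P.mulVec x) u * y u * μ u = ∑ u, x u * (P.mulVec y) u * μ u := by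
    intro x y
    have lhs_eq : ∑ u, (P.mulVec x) u * y u * μ u
        = ∑ u, ∑ v, P u v * x v * y u * μ u := by
      apply Finset.sum_congr rfl
      intro u _
      rw [Matrix.mulVec, dotProduct, Finset.sum_mul, Finset.sum_mul]
    have rhs_eq : ∑ v, x v * (P.mulVec y) v * μ v
        = ∑ v, ∑ u, x v * (P v u * y u) * μ v := by
      apply Finset.sum_congr rfl
      intro v _
      rw [Matrix.mulVec, dotProduct, Finset.mul_sum, Finset.sum_mul]
    rw [lhs_eq, rhs_eq, Finset.sum_comm]
    apply Finset.sum_congr rfl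
    intro v _
    apply Finset.sum_congr rfl
    intro u _
    linear_combination x v * y u * hPsym u v
  refine ⟨?_, part2, ?_⟩
  · -- part 1
    intro f
    refine ⟨P.mulVec f, ?_, ?_, ?_⟩
    · rw [Matrix.mulVec_mulVec, hAP]
    · intro g hg
      have hPg : P.mulVec g = g := by
        rw [hP_def]
        exact hfix g hg ind (fun i hi => by rw [hind_def]; simp [hi])
      have hPfL : P.mulVec (f - P.mulVec f) = 0 := by
        rw [Matrix.mulVec_sub, Matrix.mulVec_mulVec, hPP, sub_self]
      calc ∑ u, (f u - (P.mulVec f) u) * g u * μ u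
          = ∑ u, ((f - P.mulVec f) u) * (P.mulVec g) u * μ u := by rw [hPg]; rfl
        _ = ∑ u, (P.mulVec (f - P.mulVec f)) u * g u * μ u := (hswap _ _).symm
        _ = 0 := by rw [hPfL]; simp
    · have hfun : (fun t : ℝ => (NormedSpace.exp (t • (A - 1))).mulVec f)
          = (fun e : Fin n → ℝ => (Vm * diagonal e * Vi).mulVec f)
            ∘ (fun t : ℝ => fun i => Real.exp (t * (lam i - 1))) := by
        funext t
        rw [Function.comp_apply, hexp t]
      rw [hfun]
      have hcont : Continuous
          (fun e : Fin n → ℝ => (Vm * diagonal e * Vi).mulVec f) := by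
        apply Continuous.matrix_mulVec
        · exact (continuous_const.matrix_mul (continuous_id.matrix_diagonal)).matrix_mul
            continuous_const
        · exact continuous_const
      have htend : Tendsto (fun t : ℝ => fun i => Real.exp (t * (lam i - 1))) atTop (nhds ind) := by
        rw [tendsto_pi_nhds]
        intro i
        by_cases hi : lam i = 1
        · have hcst : (fun t : ℝ => Real.exp (t * (lam i - 1))) = fun _ => 1 := by
            funext t
            rw [hi]
            simp
          rw [hcst, hind_def]
          simp only [hi, if_pos]
          exact tendsto_const_nhds
        · have hneg : lam i - 1 < 0 := sub_neg.2 (lt_of_le_of_ne (hlam_le i) hi)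
          have h1 : Tendsto (fun t : ℝ => t * (lam i - 1)) atTop atBot :=
            (tendsto_mul_const_atBot_of_neg hneg).2 tendsto_id
          have h2 : Tendsto (fun t : ℝ => Real.exp (t * (lam i - 1))) atTop (nhds 0) :=
            Real.tendsto_exp_atBot.comp h1
          have hi0 : ind i = 0 := by rw [hind_def]; simp [hi]
          rw [hi0]
          exact h2
      have := (hcont.tendsto ind).comp htend
      rw [hP_def]
      exact this
  · -- part 3
    intro g hg hgnc
    refine ⟨g, ?_, hgnc⟩
    have hcst : (fun t : ℝ => (NormedSpace.exp (t • (A - 1))).mulVec g) = fun _ => g := by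
      funext t
      exact part2 g hg t
    rw [hcst]
    exact tendsto_const_nhds
end
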